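/- Let A, B be finite nonempty sets of integers with min A = min B = 0, max A = M, max B = N, M ≥ N, and suppose h_A = |[0,M] \ A| ≤ |B| - 2. Then for every x ∈ [0, M] with x ∉ A, either x ∈ A + B or x + N ∈ A + B. -/
import Mathlib


open scoped Pointwise

theorem stmt4 (A B : Finset ℤ) (hA : A.Nonempty) (hB : B.Nonempty) (M N : ℤ)
    (hminA : A.min' hA = 0) (hminB : B.min' hB = 0)
    (hmaxA : A.max' hA = M) (hmaxB : B.max' hB = N) (hMN : N ≤ M)
    (hhole : ((Finset.Icc 0 M \ A).card : ℤ) ≤ (B.card : ℤ) - 2) :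
    ∀ x ∈ Finset.Icc 0 M, x ∉ A → x ∈ A + B ∨ x + N ∈ A + B := by
  intro x hx hxA
  by_contra hcon
  push_neg at hcon
  obtain ⟨h1, h2⟩ := hcon
  simp only [Finset.mem_Icc] at hx
  set f : ℤ → ℤ := fun b => if b ≤ x then x - b else x + N - b with hf
  have hBmem : ∀ b ∈ B, 0 ≤ b ∧ b ≤ N := fun b hb =>
    ⟨hminB ▸ B.min'_le b hb, hmaxB ▸ B.le_max' b hb⟩
  have hfhole : ∀ b ∈ B, f b ∈ Finset.Icc 0 M \ A := by
    intro b hb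
    obtain ⟨hb0, hbN⟩ := hBmem b hb
    have hfA : f b ∉ A := by
      intro hA'
      have hmem := Finset.add_mem_add hA' hb
      by_cases hbx : b ≤ x
      · apply h1
        have : f b + b = x := by simp only [hf, if_pos hbx]; ring
        rwa [this] at hmem
      · apply h2
        have : f b + b = x + N := by simp only [hf, if_neg hbx]; ring
        rwa [this] at hmem
    rw [Finset.mem_sdiff, Finset.mem_Icc]
    refine ⟨⟨?_, ?_⟩, hfA⟩ <;> simp only [hf] <;> split <;> omega
  have hinj : Set.InjOn f (B.erase 0 : Finset ℤ) := by
    intro b1 hb1 b2 hb2 hfe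
    simp only [Finset.coe_erase, Set.mem_diff, Finset.mem_coe, Set.mem_singleton_iff] at hb1 hb2
    obtain ⟨hb10, hb1N⟩ := hBmem b1 hb1.1
    obtain ⟨hb20, hb2N⟩ := hBmem b2 hb2.1
    simp only [hf] at hfe
    split_ifs at hfe <;> omega
  have hsub : (B.erase 0).image f ⊆ Finset.Icc 0 M \ A := by
    intro y hy
    obtain ⟨b, hb, rfl⟩ := Finset.mem_image.mp hy
    exact hfhole b (Finset.mem_of_mem_erase hb)
  have h0B : (0 : ℤ) ∈ B := hminB ▸ B.min'_mem hB
  have hcard : ((B.erase 0).image f).card = B.card - 1 := by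
    rw [Finset.card_image_of_injOn hinj, Finset.card_erase_of_mem h0B]
  have hle := Finset.card_le_card hsub
  have hBpos : 1 ≤ B.card := Finset.card_pos.mpr hB
  omega
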